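/- Let k ≥ 3 and let s, m be natural numbers with 1 ≤ m ≤ k−1. Suppose q is a natural number with q ≤ (2s)^m·X^{m/(m+1)} and b is an integer with (b,q) = 1. Then there is a constant C depending at most on s and k such that I_{s,m}(X;q,b) ≤ C·(Π_{j=m}^{k−2} q^{−1}(X/q)^j)·I_{s,k−1}(X;q,b), where the product is taken to be 1 if m > k−2. -/

import Mathlib

/-- I_{s,m}(X;q,b): the number of integral solutions of the system (8.1), i.e. of
∑_i ((q x_i + b)^k - (q y_i + b)^k) = 0 and ∑_i (x_i^j - y_i^j) = 0 (1 ≤ j ≤ m-1),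
with 0 ≤ x_i, y_i ≤ X/q. -/
noncomputable def Icount (s k m : ℕ) (X : ℝ) (q : ℕ) (b : ℤ) : ℕ :=
  Set.ncard {xy : (Fin s → ℤ) × (Fin s → ℤ) |
    (∀ i, 0 ≤ xy.1 i ∧ (xy.1 i : ℝ) ≤ X / q) ∧
    (∀ i, 0 ≤ xy.2 i ∧ (xy.2 i : ℝ) ≤ X / q) ∧
    (∑ i, (((q:ℤ) * xy.1 i + b)^k - ((q:ℤ) * xy.2 i + b)^k) = 0) ∧
    ∀ j ∈ Finset.Icc 1 (m-1), ∑ i, ((xy.1 i)^j - (xy.2 i)^j) = 0}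


open Finset
open scoped Classical

/-- The box of s-tuples with entries in [0,T]. -/
noncomputable def aux_box (s : ℕ) (T : ℤ) : Finset (Fin s → ℤ) := Fintype.piFinset fun _ => Finset.Icc 0 T

/-- Solutions of the m-th system inside the box. -/
noncomputable def aux_sol (s k m : ℕ) (q : ℕ) (b : ℤ) (T : ℤ) :
    Finset ((Fin s → ℤ) × (Fin s → ℤ)) :=
  (aux_box s T ×ˢ aux_box s T).filter fun p =>
    (∑ i, (((q:ℤ) * p.1 i + b)^k - ((q:ℤ) * p.2 i + b)^k) = 0) ∧
    ∀ j ∈ Finset.Icc 1 (m-1), ∑ i, ((p.1 i)^j - (p.2 i)^j) = 0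

/-- Solutions of the m-th system with m-th moment difference equal to h. -/
noncomputable def aux_solf (s k m : ℕ) (q : ℕ) (b : ℤ) (T : ℤ) (h : ℤ) :
    Finset ((Fin s → ℤ) × (Fin s → ℤ)) :=
  (aux_box s T ×ˢ aux_box s T).filter fun p =>
    (∑ i, (((q:ℤ) * p.1 i + b)^k - ((q:ℤ) * p.2 i + b)^k) = 0) ∧
    (∀ j ∈ Finset.Icc 1 (m-1), ∑ i, ((p.1 i)^j - (p.2 i)^j) = 0) ∧
    ∑ i, ((p.1 i)^m - (p.2 i)^m) = h

lemma nat_amgm (a b : ℕ) : 2 * (a * b) ≤ a^2 + b^2 := by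
  zify; nlinarith [sq_nonneg ((a:ℤ) - b)]

lemma card_shift_le {α γ : Type*} [DecidableEq γ] [AddCommGroup γ]
    (B : Finset α) (Φ : α → γ) (w : γ) :
    ((B ×ˢ B).filter (fun p => Φ p.1 - Φ p.2 = w)).card ≤
    ((B ×ˢ B).filter (fun p => Φ p.1 - Φ p.2 = 0)).card := by
  classical
  set V := B.image Φ with hV
  set r : γ → ℕ := fun v => (B.filter (fun x => Φ x = v)).card with hr
  have hrzero : ∀ v, v ∉ V → r v = 0 := by
    intro v hv
    rw [hr]
    simp only [Finset.card_eq_zero, Finset.filter_eq_empty_iff]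
    intro x hx hxv
    exact hv (Finset.mem_image.2 ⟨x, hx, hxv⟩)
  have key : ∀ u : γ, ((B ×ˢ B).filter (fun p => Φ p.1 - Φ p.2 = u)).card
      = ∑ v ∈ V, r v * r (v - u) := by
    intro u
    have hfib : ∀ v, ((B ×ˢ B).filter (fun p => Φ p.1 - Φ p.2 = u)).filter (fun p => Φ p.1 = v)
        = (B.filter (fun x => Φ x = v)) ×ˢ (B.filter (fun x => Φ x = v - u)) := by
      intro v
      ext p
      simp only [Finset.mem_filter, Finset.mem_product]
      constructor
      · rintro ⟨⟨⟨h1, h2⟩, h3⟩, h4⟩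
        refine ⟨⟨h1, h4⟩, h2, ?_⟩
        rw [← h4, ← h3]; abel
      · rintro ⟨⟨h1, h4⟩, h2, h5⟩
        refine ⟨⟨⟨h1, h2⟩, ?_⟩, h4⟩
        rw [h4, h5]; abel
    rw [Finset.card_eq_sum_card_fiberwise (f := fun p => Φ p.1) (t := V)
      (fun p hp => Finset.mem_image.2 ⟨p.1, (Finset.mem_product.1 (Finset.mem_filter.1 hp).1).1, rfl⟩)]
    refine Finset.sum_congr rfl fun v hv => ?_
    rw [hfib v, Finset.card_product]
  rw [key w, key 0]
  have hre : ∑ v ∈ V, r (v - w) ^ 2 ≤ ∑ v ∈ V, r v ^ 2 := by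
    have hinj : ∀ x ∈ V, ∀ y ∈ V, x - w = y - w → x = y := fun x _ y _ h => by
      have := sub_left_injective (G := γ) (b := w) h; exact this
    calc ∑ v ∈ V, r (v - w) ^ 2
        = ∑ u ∈ V.image (fun v => v - w), r u ^ 2 := (Finset.sum_image (f := fun u => r u ^ 2) hinj).symm
      _ = ∑ u ∈ (V.image (fun v => v - w)) ∩ V, r u ^ 2 := by
          refine (Finset.sum_subset Finset.inter_subset_left fun u hu hnu => ?_).symm
          have : u ∉ V := fun h => hnu (Finset.mem_inter.2 ⟨hu, h⟩)
          simp [hrzero u this]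
      _ ≤ ∑ u ∈ V, r u ^ 2 := Finset.sum_le_sum_of_subset Finset.inter_subset_right
  have h2 : 2 * ∑ v ∈ V, r v * r (v - w) ≤ 2 * ∑ v ∈ V, r v * r (v - 0) := by
    simp only [sub_zero]
    calc 2 * ∑ v ∈ V, r v * r (v - w) = ∑ v ∈ V, 2 * (r v * r (v - w)) := by
          rw [Finset.mul_sum]
      _ ≤ ∑ v ∈ V, (r v ^ 2 + r (v - w) ^ 2) := Finset.sum_le_sum fun v _ => nat_amgm _ _
      _ = ∑ v ∈ V, r v ^ 2 + ∑ v ∈ V, r (v - w) ^ 2 := Finset.sum_add_distrib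
      _ ≤ ∑ v ∈ V, r v ^ 2 + ∑ v ∈ V, r v ^ 2 := by gcongr
      _ = 2 * ∑ v ∈ V, r v * r v := by simp [two_mul, pow_two]
  exact Nat.le_of_mul_le_mul_left h2 two_pos

lemma aux_Icount_eq (s k m : ℕ) (X : ℝ) (q : ℕ) (b : ℤ) :
    Icount s k m X q b = (aux_sol s k m q b ⌊X / q⌋).card := by
  rw [Icount, ← Set.ncard_coe_finset]
  congr 1
  ext p
  simp only [aux_sol, aux_box, Finset.coe_filter, Set.mem_setOf_eq, Finset.mem_product,
    Fintype.mem_piFinset, Finset.mem_Icc]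
  constructor
  · rintro ⟨h1, h2, h3⟩
    exact ⟨⟨fun i => ⟨(h1 i).1, Int.le_floor.2 (h1 i).2⟩,
      fun i => ⟨(h2 i).1, Int.le_floor.2 (h2 i).2⟩⟩, h3⟩
  · rintro ⟨⟨h1, h2⟩, h3⟩
    exact ⟨fun i => ⟨(h1 i).1, Int.le_floor.1 (h1 i).2⟩,
      fun i => ⟨(h2 i).1, Int.le_floor.1 (h2 i).2⟩, h3⟩

lemma aux_sol_card_eq_sum (s k m : ℕ) (q : ℕ) (b : ℤ) (T : ℤ) :
    (aux_sol s k m q b T).card =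
      ∑ h ∈ (aux_sol s k m q b T).image (fun p => ∑ i, ((p.1 i)^m - (p.2 i)^m)),
        (aux_solf s k m q b T h).card := by
  classical
  rw [Finset.card_eq_sum_card_fiberwise
    (f := fun p : (Fin s → ℤ) × (Fin s → ℤ) => ∑ i, ((p.1 i)^m - (p.2 i)^m))
    (t := (aux_sol s k m q b T).image (fun p => ∑ i, ((p.1 i)^m - (p.2 i)^m)))
    (fun p hp => Finset.mem_image_of_mem _ hp)]
  refine Finset.sum_congr rfl fun h hh => ?_
  congr 1
  ext p
  simp only [aux_sol, aux_solf, Finset.mem_filter, Finset.mem_product]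
  tauto

lemma aux_ek_expand (s k : ℕ) (q b : ℤ) (x : Fin s → ℤ) :
    ∑ i, (q * x i + b)^k
      = ∑ t ∈ Finset.range (k+1), q^t * b^(k-t) * (k.choose t) * ∑ i, x i ^ t := by
  have h1 : ∀ i : Fin s, (q * x i + b)^k
      = ∑ t ∈ Finset.range (k+1), q^t * b^(k-t) * (k.choose t) * x i ^ t := by
    intro i
    rw [add_pow]
    refine Finset.sum_congr rfl fun t _ => ?_
    rw [mul_pow]; ring
  simp_rw [h1]
  rw [Finset.sum_comm]
  refine Finset.sum_congr rfl fun t _ => ?_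
  rw [Finset.mul_sum]

lemma aux_solf_card_le (s k m : ℕ) (hm1 : 1 ≤ m) (q : ℕ) (b : ℤ) (T : ℤ) (h : ℤ) :
    (aux_solf s k m q b T h).card ≤ (aux_solf s k m q b T 0).card := by
  set Φ : (Fin s → ℤ) → ((Fin m → ℤ) × ℤ) := fun x =>
    (fun j => ∑ i, x i ^ ((j:ℕ)+1), ∑ i, ((q:ℤ) * x i + b)^k) with hΦ
  set w : ℤ → (Fin m → ℤ) × ℤ := fun h => (fun j => if (j:ℕ)+1 = m then h else 0, 0) with hw
  have hiff : ∀ (h : ℤ) (p : (Fin s → ℤ) × (Fin s → ℤ)),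
      ((∑ i, (((q:ℤ) * p.1 i + b)^k - ((q:ℤ) * p.2 i + b)^k) = 0) ∧
       (∀ j ∈ Finset.Icc 1 (m-1), ∑ i, ((p.1 i)^j - (p.2 i)^j) = 0) ∧
       ∑ i, ((p.1 i)^m - (p.2 i)^m) = h) ↔ Φ p.1 - Φ p.2 = w h := by
    intro h p
    rw [Prod.ext_iff]
    simp only [hΦ, hw, Prod.fst_sub, Prod.snd_sub, Pi.sub_apply, funext_iff, Pi.sub_apply]
    constructor
    · rintro ⟨hE, hL, hm⟩
      constructor
      · intro j
        rw [← Finset.sum_sub_distrib]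
        by_cases hj : (j:ℕ)+1 = m
        · rw [if_pos hj, hj]; exact hm
        · rw [if_neg hj]
          refine hL _ (Finset.mem_Icc.2 ⟨by omega, ?_⟩)
          have := j.2; omega
      · rw [← Finset.sum_sub_distrib]
        simpa using hE
    · rintro ⟨hc, hE⟩
      refine ⟨?_, ?_, ?_⟩
      · rw [Finset.sum_sub_distrib]
        simpa using hE
      · intro j hj
        rw [Finset.mem_Icc] at hj
        have hjm : j - 1 < m := by omega
        have := hc ⟨j - 1, hjm⟩
        rw [← Finset.sum_sub_distrib] at this
        simp only at this
        have hj1 : j - 1 + 1 = j := by omega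
        rw [hj1] at this
        rw [this, if_neg (by omega)]
      · have hmm : m - 1 < m := by omega
        have := hc ⟨m - 1, hmm⟩
        rw [← Finset.sum_sub_distrib] at this
        simp only at this
        have hj1 : m - 1 + 1 = m := by omega
        rw [hj1] at this
        rw [this, if_pos rfl]
  have hset : ∀ h, aux_solf s k m q b T h
      = (aux_box s T ×ˢ aux_box s T).filter (fun p => Φ p.1 - Φ p.2 = w h) := by
    intro h
    ext p
    simp only [aux_solf, Finset.mem_filter]
    rw [hiff h p]
  rw [hset h, hset 0]
  have hw0 : w 0 = 0 := by
    simp only [hw, Prod.mk_eq_zero]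
    exact ⟨funext fun j => by split <;> rfl, trivial⟩
  rw [hw0]
  exact card_shift_le _ _ _

lemma aux_dvd_of_nonempty (s k m : ℕ) (hm1 : 1 ≤ m) (hmk : m ≤ k) (q : ℕ) (hq : 0 < q)
    (b : ℤ) (hcop : IsCoprime b (q:ℤ)) (T : ℤ) (h : ℤ)
    (hne : (aux_solf s k m q b T h).Nonempty) :
    (q:ℤ) ∣ (k.choose m : ℤ) * h := by
  obtain ⟨p, hp⟩ := hne
  simp only [aux_solf, Finset.mem_filter] at hp
  obtain ⟨hpB, hE, hL, hs⟩ := hp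
  -- the expanded equation
  have hE2 : ∑ t ∈ Finset.range (k+1),
      (q:ℤ)^t * b^(k-t) * (k.choose t) * (∑ i, (p.1 i ^ t - p.2 i ^ t)) = 0 := by
    have e1 := aux_ek_expand s k (q:ℤ) b p.1
    have e2 := aux_ek_expand s k (q:ℤ) b p.2
    have hE' : (∑ i, ((q:ℤ) * p.1 i + b)^k) - (∑ i, ((q:ℤ) * p.2 i + b)^k) = 0 := by
      rw [← Finset.sum_sub_distrib]; exact hE
    rw [e1, e2, ← Finset.sum_sub_distrib] at hE'
    calc ∑ t ∈ Finset.range (k+1),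
        (q:ℤ)^t * b^(k-t) * (k.choose t) * (∑ i, (p.1 i ^ t - p.2 i ^ t))
        = ∑ t ∈ Finset.range (k+1),
          ((q:ℤ)^t * b^(k-t) * (k.choose t) * ∑ i, p.1 i ^ t
            - (q:ℤ)^t * b^(k-t) * (k.choose t) * ∑ i, p.2 i ^ t) := by
          refine Finset.sum_congr rfl fun t _ => ?_
          rw [Finset.sum_sub_distrib, mul_sub]
      _ = 0 := hE'
  set σ : ℕ → ℤ := fun t => ∑ i, (p.1 i ^ t - p.2 i ^ t) with hσ
  have hvan : ∀ t ∈ Finset.range (k+1), t ∉ Finset.Icc m k →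
      (q:ℤ)^t * b^(k-t) * (k.choose t) * σ t = 0 := by
    intro t htr htn
    rw [Finset.mem_range] at htr
    rw [Finset.mem_Icc, not_and_or] at htn
    have ht : t < m := by omega
    rcases Nat.eq_zero_or_pos t with rfl | hpos
    · have : σ 0 = 0 := by simp [hσ]
      rw [this, mul_zero]
    · have : σ t = 0 := hL t (Finset.mem_Icc.2 ⟨hpos, by omega⟩)
      rw [this, mul_zero]
  have hsplit : ∑ t ∈ Finset.Icc m k,
      (q:ℤ)^t * b^(k-t) * (k.choose t) * σ t = 0 := by
    rw [Finset.sum_subset (fun t ht => Finset.mem_range.2 (by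
        have := (Finset.mem_Icc.1 ht).2; omega)) hvan]
    exact hE2
  rw [Finset.Icc_eq_cons_Ioc hmk, Finset.sum_cons] at hsplit
  set R : ℤ := ∑ t ∈ Finset.Ioc m k, (q:ℤ)^(t-(m+1)) * b^(k-t) * (k.choose t) * σ t with hR
  have hfac : ∑ t ∈ Finset.Ioc m k, (q:ℤ)^t * b^(k-t) * (k.choose t) * σ t
      = (q:ℤ)^(m+1) * R := by
    rw [hR, Finset.mul_sum]
    refine Finset.sum_congr rfl fun t ht => ?_
    have ht' : t = (m+1) + (t - (m+1)) := by
      have := Finset.mem_Ioc.1 ht; omega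
    calc (q:ℤ)^t * b^(k-t) * (k.choose t) * σ t
        = (q:ℤ)^((m+1) + (t - (m+1))) * b^(k-t) * (k.choose t) * σ t := by rw [← ht']
      _ = (q:ℤ)^(m+1) * ((q:ℤ)^(t-(m+1)) * b^(k-t) * (k.choose t) * σ t) := by
          rw [pow_add]; ring
  rw [hfac] at hsplit
  have hσm : σ m = h := hs
  have hqm : ((q:ℤ))^m ≠ 0 := pow_ne_zero _ (by exact_mod_cast hq.ne')
  have hkey : b^(k-m) * ((k.choose m : ℤ) * h) = (q:ℤ) * (-R) := by
    apply mul_left_cancel₀ hqm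
    have : (q:ℤ)^m * b^(k-m) * (k.choose m) * σ m + (q:ℤ)^(m+1) * R = 0 := hsplit
    rw [hσm] at this
    rw [pow_succ] at this
    linear_combination this
  have hdvd : (q:ℤ) ∣ ((k.choose m : ℤ) * h) * b^(k-m) := ⟨-R, by linear_combination hkey⟩
  exact (hcop.symm.pow_right).dvd_of_dvd_mul_right hdvd

lemma aux_abs_le (s k m : ℕ) (q : ℕ) (b : ℤ) (T : ℤ) (hT : 0 ≤ T) (h : ℤ)
    (hne : (aux_solf s k m q b T h).Nonempty) :
    |h| ≤ (s:ℤ) * T^m := by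
  obtain ⟨p, hp⟩ := hne
  simp only [aux_solf, Finset.mem_filter] at hp
  obtain ⟨hpB, hE, hL, hs⟩ := hp
  rw [Finset.mem_product] at hpB
  have hx : ∀ i, 0 ≤ p.1 i ∧ p.1 i ≤ T := by
    intro i
    have := (Fintype.mem_piFinset.1 hpB.1) i
    rwa [Finset.mem_Icc] at this
  have hy : ∀ i, 0 ≤ p.2 i ∧ p.2 i ≤ T := by
    intro i
    have := (Fintype.mem_piFinset.1 hpB.2) i
    rwa [Finset.mem_Icc] at this
  calc |h| = |∑ i, ((p.1 i)^m - (p.2 i)^m)| := by rw [hs]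
    _ ≤ ∑ i, |(p.1 i)^m - (p.2 i)^m| := Finset.abs_sum_le_sum_abs _ _
    _ ≤ ∑ _i : Fin s, T^m := by
        refine Finset.sum_le_sum fun i _ => ?_
        have h1 : 0 ≤ (p.1 i)^m := pow_nonneg (hx i).1 m
        have h2 : (p.1 i)^m ≤ T^m := pow_le_pow_left₀ (hx i).1 (hx i).2 m
        have h3 : 0 ≤ (p.2 i)^m := pow_nonneg (hy i).1 m
        have h4 : (p.2 i)^m ≤ T^m := pow_le_pow_left₀ (hy i).1 (hy i).2 m
        rw [abs_le]
        constructor <;> linarith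
    _ = (s:ℤ) * T^m := by
        rw [Finset.sum_const, Finset.card_univ, Fintype.card_fin, nsmul_eq_mul]

lemma aux_choose_le (k m : ℕ) : k.choose m ≤ 2^k := by
  rcases le_or_gt m k with h | h
  · calc k.choose m ≤ ∑ j ∈ Finset.range (k+1), k.choose j :=
        Finset.single_le_sum (f := fun j => k.choose j) (fun _ _ => Nat.zero_le _)
          (Finset.mem_range.2 (by omega))
      _ = 2^k := Nat.sum_range_choose k
  · rw [Nat.choose_eq_zero_of_lt h]; exact Nat.zero_le _

lemma aux_sol_succ (s k m : ℕ) (hm1 : 1 ≤ m) (q : ℕ) (b : ℤ) (T : ℤ) :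
    aux_sol s k (m+1) q b T = aux_solf s k m q b T 0 := by
  ext p
  simp only [aux_sol, aux_solf, Finset.mem_filter, Nat.add_sub_cancel]
  constructor
  · rintro ⟨hB, hE, hL⟩
    exact ⟨hB, hE, fun j hj => hL j (Finset.mem_Icc.2 (by rw [Finset.mem_Icc] at hj; omega)),
      hL m (Finset.mem_Icc.2 ⟨hm1, le_refl m⟩)⟩
  · rintro ⟨hB, hE, hL, h0⟩
    refine ⟨hB, hE, fun j hj => ?_⟩
    rw [Finset.mem_Icc] at hj
    rcases eq_or_ne j m with rfl | hne
    · exact h0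
    · exact hL j (Finset.mem_Icc.2 ⟨hj.1, by omega⟩)

lemma aux_step (k s m : ℕ) (hs : 1 ≤ s) (hm1 : 1 ≤ m) (hmk : m ≤ k) (X : ℝ) (hX : 1 ≤ X)
    (q : ℕ) (hq : 0 < q) (b : ℤ) (hcop : IsCoprime b (q:ℤ))
    (hq2 : (q:ℝ)^(m+1) ≤ (2*(s:ℝ))^(k*(k+1)) * X^m) :
    (Icount s k m X q b : ℝ) ≤
      ((2:ℝ)^(k+1)*(s:ℝ) + 2*(2*(s:ℝ))^(k*(k+1))) * ((q:ℝ)⁻¹ * (X/(q:ℝ))^m)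
        * (Icount s k (m+1) X q b : ℝ) := by
  have hqR : (0:ℝ) < q := by exact_mod_cast hq
  have hXq : (0:ℝ) < X / q := div_pos (by linarith) hqR
  set T : ℤ := ⌊X / (q:ℝ)⌋ with hTdef
  have hT0 : 0 ≤ T := Int.floor_nonneg.2 hXq.le
  have hTle : (T:ℝ) ≤ X / q := Int.floor_le _
  set H : Finset ℤ := (aux_sol s k m q b T).image (fun p => ∑ i, ((p.1 i)^m - (p.2 i)^m))
    with hH
  have hne : ∀ h ∈ H, (aux_solf s k m q b T h).Nonempty := by
    intro h hh
    obtain ⟨p, hp, hph⟩ := Finset.mem_image.1 hh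
    refine ⟨p, ?_⟩
    simp only [aux_sol, Finset.mem_filter] at hp
    simp only [aux_solf, Finset.mem_filter]
    exact ⟨hp.1, hp.2.1, hp.2.2, hph⟩
  -- counting bound
  have hcount : (aux_sol s k m q b T).card ≤ H.card * (aux_solf s k m q b T 0).card := by
    rw [aux_sol_card_eq_sum s k m q b T, ← hH, ← smul_eq_mul]
    exact Finset.sum_le_card_nsmul H _ _ (fun h _ => aux_solf_card_le s k m hm1 q b T h)
  -- cardinality of H
  set Cm := ((k.choose m : ℕ) : ℤ) with hCmdef
  have hCm0 : 0 < Cm := by rw [hCmdef]; exact_mod_cast Nat.choose_pos hmk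
  set a := Cm * ((s:ℤ) * T^m) with hadef
  have ha0 : 0 ≤ a := by
    apply mul_nonneg hCm0.le
    exact mul_nonneg (by positivity) (pow_nonneg hT0 m)
  set L1 := (-a) / (q:ℤ) with hL1def
  set L2 := a / (q:ℤ) with hL2def
  have hqZ : (0:ℤ) < (q:ℤ) := by exact_mod_cast hq
  have hcardH : H.card ≤ (Finset.Icc L1 L2).card := by
    apply Finset.card_le_card_of_injOn (fun h => (Cm * h) / q)
    · intro h hh
      have hd := aux_dvd_of_nonempty s k m hm1 hmk q hq b hcop T h (hne h hh)
      have hab := aux_abs_le s k m q b T hT0 h (hne h hh)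
      rw [abs_le] at hab
      rw [Finset.mem_coe, Finset.mem_Icc]
      constructor
      · exact Int.ediv_le_ediv hqZ (by nlinarith [hab.1, hCm0])
      · exact Int.ediv_le_ediv hqZ (by nlinarith [hab.2, hCm0])
    · intro h1 hh1 h2 hh2 heq
      have hd1 := aux_dvd_of_nonempty s k m hm1 hmk q hq b hcop T h1 (hne h1 hh1)
      have hd2 := aux_dvd_of_nonempty s k m hm1 hmk q hq b hcop T h2 (hne h2 hh2)
      have e1 : Cm * h1 / (q:ℤ) * q = Cm * h1 := Int.ediv_mul_cancel hd1
      have e2 : Cm * h2 / (q:ℤ) * q = Cm * h2 := Int.ediv_mul_cancel hd2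
      have heq' : Cm * h1 / (q:ℤ) = Cm * h2 / (q:ℤ) := heq
      have : Cm * h1 = Cm * h2 := by rw [← e1, ← e2, heq']
      exact mul_left_cancel₀ hCm0.ne' this
  clear_value Cm a L1 L2
  -- real bound on the interval cardinality
  have hL2R : (L2:ℝ) ≤ (a:ℝ) / q := by
    have h1 : (q:ℤ) * L2 ≤ a := by
      rw [hL2def]
      linarith [Int.mul_ediv_add_emod a (q:ℤ), Int.emod_nonneg a hqZ.ne']
    rw [le_div_iff₀ hqR]
    calc (L2:ℝ) * q = ((q:ℤ) * L2 : ℤ) := by push_cast; ring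
      _ ≤ ((a:ℤ):ℝ) := by exact_mod_cast h1
  have hL1R : -(a:ℝ)/q - 1 ≤ (L1:ℝ) := by
    have h1 : -a - q ≤ (q:ℤ) * L1 := by
      rw [hL1def]
      linarith [Int.mul_ediv_add_emod (-a) (q:ℤ), Int.emod_lt_of_pos (-a) hqZ]
    rw [sub_le_iff_le_add, div_le_iff₀ hqR]
    have h2 : ((-a - q : ℤ):ℝ) ≤ (q:ℝ) * L1 := by exact_mod_cast h1
    push_cast at h2
    linarith
  have hIccR : ((Finset.Icc L1 L2).card : ℝ) ≤ 2 * (a:ℝ)/q + 2 := by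
    rw [Int.card_Icc]
    have h0 : (0:ℝ) ≤ 2 * (a:ℝ)/q + 2 := by positivity
    rcases le_or_gt (L2 + 1 - L1) 0 with hD | hD
    · rw [Int.toNat_of_nonpos hD]
      simpa using h0
    · have hcast : (((L2 + 1 - L1).toNat : ℕ) : ℝ) = ((L2:ℝ) + 1 - (L1:ℝ)) := by
        rw [show (((L2 + 1 - L1).toNat : ℕ) : ℝ) = ((((L2 + 1 - L1).toNat : ℕ) : ℤ) : ℝ) by
          push_cast; ring, Int.toNat_of_nonneg hD.le]
        push_cast; ring
      rw [hcast]
      have h1 : -((a:ℝ)/(q:ℝ)) - 1 ≤ (L1:ℝ) := by rw [neg_div] at hL1R; exact hL1R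
      have h2 : 2 * (a:ℝ) / (q:ℝ) = 2 * ((a:ℝ)/(q:ℝ)) := by ring
      rw [h2]
      linarith
  -- putting it together
  have hmain : (Icount s k m X q b : ℝ) ≤ (2 * (a:ℝ)/q + 2) * (Icount s k (m+1) X q b : ℝ) := by
    rw [aux_Icount_eq s k m X q b, aux_Icount_eq s k (m+1) X q b,
      aux_sol_succ s k m hm1 q b ⌊X / (q:ℝ)⌋]
    have : ((aux_sol s k m q b T).card : ℝ)
        ≤ (H.card : ℝ) * ((aux_solf s k m q b T 0).card : ℝ) := by exact_mod_cast hcount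
    refine this.trans ?_
    apply mul_le_mul_of_nonneg_right _ (by positivity)
    calc (H.card : ℝ) ≤ ((Finset.Icc L1 L2).card : ℝ) := by exact_mod_cast hcardH
      _ ≤ 2 * (a:ℝ)/q + 2 := hIccR
  refine hmain.trans ?_
  apply mul_le_mul_of_nonneg_right _ (by positivity)
  -- bound 2a/q + 2 ≤ A * (q⁻¹ (X/q)^m)
  have hP : (q:ℝ)⁻¹ * (X/(q:ℝ))^m = X^m / (q:ℝ)^(m+1) := by
    rw [div_pow, pow_succ]
    field_simp
  have hone : 1 ≤ (2*(s:ℝ))^(k*(k+1)) * ((q:ℝ)⁻¹ * (X/(q:ℝ))^m) := by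
    rw [hP, ← mul_div_assoc, le_div_iff₀ (by positivity)]
    linarith
  have hTR : (0:ℝ) ≤ (T:ℝ) := by exact_mod_cast hT0
  have haR : (a:ℝ) ≤ 2^k * ((s:ℝ) * ((X/(q:ℝ))^m)) := by
    have h1 : (Cm:ℝ) ≤ 2^k := by
      rw [hCmdef]
      exact_mod_cast aux_choose_le k m
    have h2 : ((T:ℝ))^m ≤ (X/(q:ℝ))^m := pow_le_pow_left₀ hTR hTle m
    have hadefR : (a:ℝ) = (Cm:ℝ) * ((s:ℝ) * ((T:ℝ))^m) := by rw [hadef]; push_cast; ring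
    have hc0 : (0:ℝ) ≤ (Cm:ℝ) := by exact_mod_cast hCm0.le
    rw [hadefR]
    apply mul_le_mul h1 (mul_le_mul_of_nonneg_left h2 (by positivity)) (by positivity) (by positivity)
  have h2a : 2 * (a:ℝ)/q ≤ (2:ℝ)^(k+1)*(s:ℝ) * ((q:ℝ)⁻¹ * (X/(q:ℝ))^m) := by
    have hrw : (2:ℝ)^(k+1)*(s:ℝ) * ((q:ℝ)⁻¹ * (X/(q:ℝ))^m)
        = 2 * ((2:ℝ)^k * ((s:ℝ) * ((X/(q:ℝ))^m))) / q := by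
      rw [pow_succ]
      field_simp
    rw [hrw]
    gcongr
  have h2b : (2:ℝ) ≤ 2*(2*(s:ℝ))^(k*(k+1)) * ((q:ℝ)⁻¹ * (X/(q:ℝ))^m) := by
    have h2 : 2*(2*(s:ℝ))^(k*(k+1)) * ((q:ℝ)⁻¹ * (X/(q:ℝ))^m)
        = 2 * ((2*(s:ℝ))^(k*(k+1)) * ((q:ℝ)⁻¹ * (X/(q:ℝ))^m)) := by ring
    rw [h2]
    linarith
  calc 2 * (a:ℝ)/q + 2
      ≤ (2:ℝ)^(k+1)*(s:ℝ) * ((q:ℝ)⁻¹ * (X/(q:ℝ))^m)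
        + 2*(2*(s:ℝ))^(k*(k+1)) * ((q:ℝ)⁻¹ * (X/(q:ℝ))^m) := by linarith
    _ = ((2:ℝ)^(k+1)*(s:ℝ) + 2*(2*(s:ℝ))^(k*(k+1))) * ((q:ℝ)⁻¹ * (X/(q:ℝ))^m) := by ring

lemma aux_chain (k s : ℕ) (hs : 1 ≤ s) (hk : 3 ≤ k) (X : ℝ) (hX : 1 ≤ X)
    (q : ℕ) (hq : 0 < q) (b : ℤ) (hcop : IsCoprime b (q:ℤ)) :
    ∀ n m : ℕ, 1 ≤ m → n + m = k - 1 →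
    (∀ m', m ≤ m' → m' ≤ k - 2 → (q:ℝ)^(m'+1) ≤ (2*(s:ℝ))^(k*(k+1)) * X^(m')) →
    (Icount s k m X q b : ℝ) ≤
      ((2:ℝ)^(k+1)*(s:ℝ) + 2*(2*(s:ℝ))^(k*(k+1)))^n
        * (∏ j ∈ Finset.Icc m (k-2), (q:ℝ)⁻¹ * (X/(q:ℝ))^j)
        * (Icount s k (k-1) X q b : ℝ) := by
  intro n
  induction n with
  | zero =>
    intro m hm1 hmk _
    have hmeq : m = k - 1 := by omega
    subst hmeq
    have hempty : Finset.Icc (k-1) (k-2) = (∅ : Finset ℕ) := Finset.Icc_eq_empty (by omega)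
    rw [hempty]
    simp
  | succ n ih =>
    intro m hm1 hmk hq2
    have hmk2 : m ≤ k - 2 := by omega
    have hstep := aux_step k s m hs hm1 (by omega : m ≤ k) X hX q hq b hcop
      (hq2 m le_rfl hmk2)
    have hih := ih (m+1) (by omega) (by omega) (fun m' h1 h2 => hq2 m' (by omega) h2)
    set A := ((2:ℝ)^(k+1)*(s:ℝ) + 2*(2*(s:ℝ))^(k*(k+1))) with hA
    have hprod : ∏ j ∈ Finset.Icc m (k-2), (q:ℝ)⁻¹ * (X/(q:ℝ))^j
        = ((q:ℝ)⁻¹ * (X/(q:ℝ))^m) * ∏ j ∈ Finset.Icc (m+1) (k-2), (q:ℝ)⁻¹ * (X/(q:ℝ))^j := by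
      rw [Finset.Icc_eq_cons_Ioc hmk2, Finset.prod_cons, ← Finset.Icc_add_one_left_eq_Ioc]
    calc (Icount s k m X q b : ℝ)
        ≤ A * ((q:ℝ)⁻¹ * (X/(q:ℝ))^m) * (Icount s k (m+1) X q b : ℝ) := hstep
      _ ≤ A * ((q:ℝ)⁻¹ * (X/(q:ℝ))^m)
          * (A^n * (∏ j ∈ Finset.Icc (m+1) (k-2), (q:ℝ)⁻¹*(X/(q:ℝ))^j)
            * (Icount s k (k-1) X q b : ℝ)) := by
          apply mul_le_mul_of_nonneg_left hih (by positivity)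
      _ = A^(n+1) * (∏ j ∈ Finset.Icc m (k-2), (q:ℝ)⁻¹*(X/(q:ℝ))^j)
          * (Icount s k (k-1) X q b : ℝ) := by
          rw [hprod]; ring

/-- Lemma 8.4: for 1 ≤ m ≤ k-1, q ≤ (2s)^m X^{m/(m+1)} and (b,q) = 1, one has
I_{s,m}(X;q,b) ≤ C (∏_{j=m}^{k-2} q^{-1} (X/q)^j) I_{s,k-1}(X;q,b). -/
theorem lemma8_4 (k s m : ℕ) (hk : 3 ≤ k) (hm1 : 1 ≤ m) (hmk : m ≤ k - 1) :
    ∃ C : ℝ, 0 < C ∧ ∃ X₀ : ℝ, ∀ X : ℝ, X₀ ≤ X →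
    ∀ q : ℕ, 0 < q → (q:ℝ) ≤ (2*(s:ℝ))^m * X ^ ((m:ℝ)/((m:ℝ)+1)) →
    ∀ b : ℤ, IsCoprime b (q:ℤ) →
      (Icount s k m X q b : ℝ) ≤
        C * (∏ j ∈ Finset.Icc m (k-2), (q:ℝ)⁻¹ * (X/(q:ℝ))^j) *
          (Icount s k (k-1) X q b : ℝ) := by
  rcases Nat.eq_zero_or_pos s with rfl | hs
  · refine ⟨1, one_pos, 1, fun X hX q hq hqle b hcop => ?_⟩
    exfalso
    have h0 : (2*((0:ℕ):ℝ)) = 0 := by norm_num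
    rw [h0, zero_pow (by omega : m ≠ 0), zero_mul] at hqle
    have : (0:ℝ) < q := by exact_mod_cast hq
    linarith
  · have hs1 : (1:ℝ) ≤ (s:ℝ) := by exact_mod_cast hs
    have h2s : (1:ℝ) ≤ 2*(s:ℝ) := by linarith
    set A := ((2:ℝ)^(k+1)*(s:ℝ) + 2*(2*(s:ℝ))^(k*(k+1))) with hA
    have hA1 : 1 ≤ A := by
      have h1 : (1:ℝ) ≤ (2*(s:ℝ))^(k*(k+1)) := one_le_pow₀ h2s
      have h2 : (0:ℝ) < (2:ℝ)^(k+1) := by positivity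
      rw [hA]
      nlinarith
    refine ⟨A^k, by positivity, 1, fun X hX q hq hqle b hcop => ?_⟩
    have hX0 : (0:ℝ) ≤ X := by linarith
    have hq2 : ∀ m', m ≤ m' → m' ≤ k - 2 →
        (q:ℝ)^(m'+1) ≤ (2*(s:ℝ))^(k*(k+1)) * X^(m') := by
      intro m' hmm' hm'k
      have hq0 : (0:ℝ) ≤ (q:ℝ) := by positivity
      have step1 : (q:ℝ)^(m'+1) ≤ ((2*(s:ℝ))^m * X ^ ((m:ℝ)/((m:ℝ)+1)))^(m'+1) :=
        pow_le_pow_left₀ hq0 hqle (m'+1)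
      have step2 : ((2*(s:ℝ))^m * X ^ ((m:ℝ)/((m:ℝ)+1)))^(m'+1)
          = (2*(s:ℝ))^(m*(m'+1)) * (X ^ ((m:ℝ)/((m:ℝ)+1)))^(m'+1) := by
        rw [mul_pow, ← pow_mul]
      have step3 : (X ^ ((m:ℝ)/((m:ℝ)+1)))^(m'+1)
          = X ^ (((m:ℝ)/((m:ℝ)+1)) * ((m':ℝ)+1)) := by
        rw [← Real.rpow_natCast (X ^ ((m:ℝ)/((m:ℝ)+1))) (m'+1), ← Real.rpow_mul hX0]
        norm_num
      have hexp : ((m:ℝ)/((m:ℝ)+1)) * ((m':ℝ)+1) ≤ (m':ℝ) := by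
        rw [div_mul_eq_mul_div, div_le_iff₀ (by positivity)]
        have h1 : (m:ℝ) ≤ m' := by exact_mod_cast hmm'
        nlinarith
      have step4 : X ^ (((m:ℝ)/((m:ℝ)+1)) * ((m':ℝ)+1)) ≤ X ^ ((m':ℝ)) :=
        Real.rpow_le_rpow_of_exponent_le hX hexp
      have step5 : X ^ ((m':ℝ)) = X ^ m' := by
        rw [Real.rpow_natCast]
      calc (q:ℝ)^(m'+1)
          ≤ (2*(s:ℝ))^(m*(m'+1)) * (X ^ ((m:ℝ)/((m:ℝ)+1)))^(m'+1) := by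
            rw [← step2]; exact step1
        _ = (2*(s:ℝ))^(m*(m'+1)) * X ^ (((m:ℝ)/((m:ℝ)+1)) * ((m':ℝ)+1)) := by rw [step3]
        _ ≤ (2*(s:ℝ))^(m*(m'+1)) * X ^ m' := by
            rw [← step5]
            exact mul_le_mul_of_nonneg_left step4 (by positivity)
        _ ≤ (2*(s:ℝ))^(k*(k+1)) * X ^ m' := by
            apply mul_le_mul_of_nonneg_right _ (pow_nonneg hX0 m')
            exact pow_le_pow_right₀ h2s (Nat.mul_le_mul (by omega) (by omega))
    have hchain := aux_chain k s hs hk X hX q hq b hcop (k-1-m) m hm1 (by omega) hq2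
    refine hchain.trans ?_
    apply mul_le_mul_of_nonneg_right _ (by positivity)
    apply mul_le_mul_of_nonneg_right _ (Finset.prod_nonneg fun j _ => by positivity)
    exact pow_le_pow_right₀ hA1 (by omega)
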